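/- Fix an integer K ≥ 1 and reals ρ_i > 0, p ∈ [0,1]. Set ρ_{i,p} = ρ_i p, ǎ_0 = Σ_{j=0}^{K} (K·ρ_{i,p})^j/j!, η = Σ_{j=0}^{K−1} ((K·ρ_{i,p})^j/j!)·(K−j)/K, and P_B^{CD}(p) = (1−p) + p·(K·ρ_{i,p})^K/(K!·ǎ_0). Then 1 − ρ_i·(1 − P_B^{CD}(p)) = η/ǎ_0. Consequently, for any λ_t > 0 and μ_t > 0 with λ_t·ǎ_0 < η·μ_t, one has 1/(μ_t·(1 − ρ_i·(1 − P_B^{CD}(p))) − λ_t) = ǎ_0/(η·μ_t − λ_t·ǎ_0); that is, the CD policies satisfy the pseudo conservation law E_{S_t}(P_B) = 1/(μ_t(1 − ρ_i(1 − P_B)) − λ_t). -/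

import Mathlib

/-- The CD policies satisfy the pseudo conservation law. -/
theorem cd_pseudo_conservation
    (K : ℕ) (hK : 1 ≤ K) (ρ p : ℝ) (hρ : 0 < ρ) (hp0 : 0 ≤ p) (hp1 : p ≤ 1) :
    (1 - ρ * (1 - ((1 - p) + p * ((K : ℝ) * (ρ * p)) ^ K
          / ((Nat.factorial K : ℝ)
              * ∑ j ∈ Finset.range (K + 1),
                  ((K : ℝ) * (ρ * p)) ^ j / (Nat.factorial j : ℝ))))
        = (∑ j ∈ Finset.range K,
              (((K : ℝ) * (ρ * p)) ^ j / (Nat.factorial j : ℝ)) * (((K : ℝ) - j) / K))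
          / (∑ j ∈ Finset.range (K + 1),
              ((K : ℝ) * (ρ * p)) ^ j / (Nat.factorial j : ℝ)))
    ∧ ∀ lamt μt : ℝ, 0 < lamt → 0 < μt →
        lamt * (∑ j ∈ Finset.range (K + 1),
            ((K : ℝ) * (ρ * p)) ^ j / (Nat.factorial j : ℝ))
          < (∑ j ∈ Finset.range K,
              (((K : ℝ) * (ρ * p)) ^ j / (Nat.factorial j : ℝ)) * (((K : ℝ) - j) / K)) * μt →
        1 / (μt * (1 - ρ * (1 - ((1 - p) + p * ((K : ℝ) * (ρ * p)) ^ K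
              / ((Nat.factorial K : ℝ)
                  * ∑ j ∈ Finset.range (K + 1),
                      ((K : ℝ) * (ρ * p)) ^ j / (Nat.factorial j : ℝ))))) - lamt)
          = (∑ j ∈ Finset.range (K + 1),
                ((K : ℝ) * (ρ * p)) ^ j / (Nat.factorial j : ℝ))
              / ((∑ j ∈ Finset.range K,
                    (((K : ℝ) * (ρ * p)) ^ j / (Nat.factorial j : ℝ))
                      * (((K : ℝ) - j) / K)) * μt
                  - lamt * (∑ j ∈ Finset.range (K + 1),
                      ((K : ℝ) * (ρ * p)) ^ j / (Nat.factorial j : ℝ))) := by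
  set a : ℝ := (K : ℝ) * (ρ * p) with ha
  set S : ℝ := ∑ j ∈ Finset.range (K + 1), a ^ j / (Nat.factorial j : ℝ) with hSdef
  set η : ℝ := ∑ j ∈ Finset.range K, (a ^ j / (Nat.factorial j : ℝ)) * (((K : ℝ) - j) / K) with hηdef
  have hKne : ((K : ℝ)) ≠ 0 := by positivity
  have hfac : ((Nat.factorial K : ℝ)) ≠ 0 := by positivity
  have ha0 : 0 ≤ a := by positivity
  have hS1 : (1 : ℝ) ≤ S := by
    rw [hSdef]
    calc (1:ℝ) = a ^ 0 / (Nat.factorial 0 : ℝ) := by simp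
    _ ≤ _ := by
      apply Finset.single_le_sum (f := fun j => a ^ j / (Nat.factorial j : ℝ))
      · intro i _; positivity
      · simp
  have hSpos : 0 < S := lt_of_lt_of_le one_pos hS1
  -- key combinatorial identities
  have h1 : S = (∑ j ∈ Finset.range K, a ^ j / (Nat.factorial j : ℝ)) + a ^ K / (Nat.factorial K : ℝ) := by
    rw [hSdef, Finset.sum_range_succ]
  have h2 : a * (∑ j ∈ Finset.range K, a ^ j / (Nat.factorial j : ℝ))
      = (∑ j ∈ Finset.range K, (j : ℝ) * (a ^ j / (Nat.factorial j : ℝ)))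
        + (K : ℝ) * (a ^ K / (Nat.factorial K : ℝ)) := by
    have := Finset.sum_range_succ (fun j => (j : ℝ) * (a ^ j / (Nat.factorial j : ℝ))) K
    rw [← this, Finset.sum_range_succ' (fun j => (j : ℝ) * (a ^ j / (Nat.factorial j : ℝ))) K,
      Finset.mul_sum]
    simp only [Nat.cast_zero, zero_mul, add_zero, Nat.cast_add, Nat.cast_one]
    apply Finset.sum_congr rfl
    intro j _
    have hfj : ((Nat.factorial j : ℝ)) ≠ 0 := by positivity
    rw [Nat.factorial_succ]
    push_cast
    field_simp
    ring
  have hη : (K : ℝ) * η = (K : ℝ) * (∑ j ∈ Finset.range K, a ^ j / (Nat.factorial j : ℝ))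
      - (∑ j ∈ Finset.range K, (j : ℝ) * (a ^ j / (Nat.factorial j : ℝ))) := by
    rw [hηdef, Finset.mul_sum, Finset.mul_sum, ← Finset.sum_sub_distrib]
    apply Finset.sum_congr rfl
    intro j _
    field_simp
  have hrp : ρ * p = a / (K : ℝ) := by rw [ha]; field_simp
  have hmain : 1 - ρ * (1 - ((1 - p) + p * a ^ K / ((Nat.factorial K : ℝ) * S))) = η / S := by
    have expand : 1 - ρ * (1 - ((1 - p) + p * a ^ K / ((Nat.factorial K : ℝ) * S)))
        = 1 - (ρ * p) + (ρ * p) * a ^ K / ((Nat.factorial K : ℝ) * S) := by ring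
    have h1' : (Nat.factorial K : ℝ) * S
        = (Nat.factorial K : ℝ) * (∑ j ∈ Finset.range K, a ^ j / (Nat.factorial j : ℝ)) + a ^ K := by
      rw [h1]; field_simp
    have h2' : (Nat.factorial K : ℝ) * (a * (∑ j ∈ Finset.range K, a ^ j / (Nat.factorial j : ℝ)))
        = (Nat.factorial K : ℝ) * (∑ j ∈ Finset.range K, (j : ℝ) * (a ^ j / (Nat.factorial j : ℝ)))
          + (K : ℝ) * a ^ K := by
      rw [h2]; field_simp
    have key : (K : ℝ) * (Nat.factorial K : ℝ) * S - a * (Nat.factorial K : ℝ) * S + a * a ^ K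
        = (K : ℝ) * (Nat.factorial K : ℝ) * η := by
      linear_combination ((K : ℝ) - a) * h1' - h2' - (Nat.factorial K : ℝ) * hη
    rw [expand, hrp]
    field_simp
    linear_combination key
  constructor
  · exact hmain
  · intro lamt μt hl hm hlt
    rw [hmain]
    have hd : μt * (η / S) - lamt = (η * μt - lamt * S) / S := by
      field_simp
    rw [hd, one_div_div]
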